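/- Let X be a Banach space with a monotone unconditional basis (e_i)_{i∈I} and suppose that for each x in the unit sphere of X there is a finite set σ ⊆ I with ||P_σ(x)|| = 1, where P_σ is the basis projection onto coordinates in σ. Then, with H_n = { h ∈ B_{X*} : |supp(h)| ≤ n } where supp(h) = { i : h(e_i) ≠ 0 }, the set H = ⋃_{n=0}^∞ H_n is a boundary of X. -/

import Mathlib

open scoped BigOperators

/-- Corollary: if `X` has a monotone unconditional basis `(e_i)` (with biorthogonal
functionals `e_i*` and projections `P_σ x = Σ_{i∈σ} e_i*(x) e_i` of norm at most one)
and every norm-one `x` admits a finite `σ` with `‖P_σ x‖ = 1`, then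
`H = ⋃ₙ Hₙ = { h ∈ B_{X*} : supp h finite }` is a boundary of `X`. -/
theorem finite_support_boundary {X : Type*} [NormedAddCommGroup X] [NormedSpace ℝ X]
    [CompleteSpace X] {I : Type*} [DecidableEq I]
    (e : I → X) (estar : I → (X →L[ℝ] ℝ))
    (hbiorth : ∀ i j, estar i (e j) = if i = j then (1 : ℝ) else 0)
    (hdense : Dense (↑(Submodule.span ℝ (Set.range e)) : Set X))
    (hmono : ∀ (σ : Finset I) (x : X), ‖∑ i ∈ σ, estar i x • e i‖ ≤ ‖x‖)
    (hproj : ∀ x : X, ‖x‖ = 1 → ∃ σ : Finset I, ‖∑ i ∈ σ, estar i x • e i‖ = 1) :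
    ∀ x : X, ‖x‖ = 1 →
      ∃ h : X →L[ℝ] ℝ, ‖h‖ ≤ 1 ∧ ({i : I | h (e i) ≠ 0}).Finite ∧ h x = 1 := by
  intro x hx
  obtain ⟨σ, hσ⟩ := hproj x hx
  -- the projection P_σ as a continuous linear map
  set P : X →L[ℝ] X := ∑ i ∈ σ, (estar i).smulRight (e i) with hP
  have hPapp : ∀ y : X, P y = ∑ i ∈ σ, estar i y • e i := by
    intro y
    simp [hP, ContinuousLinearMap.sum_apply]
  have hPx : ‖P x‖ = 1 := by rw [hPapp]; exact hσ
  have hPxne : P x ≠ 0 := by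
    intro h0; rw [h0, norm_zero] at hPx; exact one_ne_zero hPx.symm
  obtain ⟨f, hf1, hfx⟩ := exists_dual_vector ℝ (P x) (norm_ne_zero_iff.mpr hPxne)
  refine ⟨f.comp P, ?_, ?_, ?_⟩
  · refine ContinuousLinearMap.opNorm_le_bound _ zero_le_one ?_
    intro y
    calc ‖f (P y)‖ ≤ ‖f‖ * ‖P y‖ := f.le_opNorm _
      _ ≤ 1 * ‖y‖ := by
          rw [hf1]
          exact mul_le_mul_of_nonneg_left (by rw [hPapp]; exact hmono σ y) zero_le_one
      _ = 1 * ‖y‖ := rfl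
  · apply Set.Finite.subset σ.finite_toSet
    intro j hj
    by_contra hjσ
    apply hj
    simp only [ContinuousLinearMap.comp_apply, hPapp]
    have : ∀ i ∈ σ, estar i (e j) • e i = 0 := by
      intro i hi
      rw [hbiorth i j, if_neg (by rintro rfl; exact hjσ hi), zero_smul]
    rw [Finset.sum_congr rfl this, Finset.sum_const_zero, map_zero]
  · have : (f.comp P) x = f (P x) := rfl
    rw [this]
    have : (f (P x) : ℝ) = ‖P x‖ := by exact_mod_cast hfx
    rw [this, hPx]
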